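/- Let v_f > 0, k_j > 0, 0 < v_c < v_f, k_c = (v_f - v_c)·k_j/v_f, and fix an average density K with k_c < K ≤ k_j. Over the admissible set S_K = {(k1,k2) : 0 ≤ k1 ≤ k_j, 0 ≤ k2 ≤ k_j, k1 + k2 = 2K}, the cruising space-mean speed W(k1,k2) = (k1·G(k1) + k2·min{v_c, G(k2)})/(k1 + k2) attains its maximum value v_f(1 - K/k_j), and this maximum is attained at the homogeneous configuration k1 = k2 = K; i.e., beyond the critical density the upper envelope with cruising coincides with the Greenshields network fundamental diagram. -/

import Mathlib

/-- Greenshields speed at density `k`, with free-flow speed `vf` and jam density `kj`. -/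
noncomputable def G (vf kj k : ℝ) : ℝ := vf * (1 - k / kj)

/-- Two-bin network space-mean speed where all vehicles in bin 2 cruise for parking
at desired cruising speed `vc` (worst case). -/
noncomputable def W (vf kj vc k1 k2 : ℝ) : ℝ :=
  (k1 * G vf kj k1 + k2 * min vc (G vf kj k2)) / (k1 + k2)

/-- Admissible two-bin configurations at network average density `K`. -/
def SK (kj K : ℝ) : Set (ℝ × ℝ) :=
  {p | 0 ≤ p.1 ∧ p.1 ≤ kj ∧ 0 ≤ p.2 ∧ p.2 ≤ kj ∧ p.1 + p.2 = 2 * K}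

/-- With cruising (worst case), for `kc < K ≤ kj`, the maximum of `W` over `S_K`
is `vf (1 - K/kj)`, attained at the homogeneous configuration `k1 = k2 = K`:
beyond the critical density the upper envelope coincides with the Greenshields NFD. -/
theorem cruising_upper_envelope_4 (vf kj vc K : ℝ)
    (hvf : 0 < vf) (hkj : 0 < kj) (hvc0 : 0 < vc) (hvcf : vc < vf)
    (hK0 : (vf - vc) * kj / vf < K) (hK : K ≤ kj) :
    (∀ p ∈ SK kj K, W vf kj vc p.1 p.2 ≤ vf * (1 - K / kj)) ∧
    ((K, K) ∈ SK kj K ∧ W vf kj vc K K = vf * (1 - K / kj)) := by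
  have hkj' : kj ≠ 0 := ne_of_gt hkj
  have hKpos : 0 < K := by
    have : 0 < (vf - vc) * kj / vf := div_pos (mul_pos (by linarith) hkj) hvf
    linarith
  have hGK : G vf kj K ≤ vc := by
    have h1 : (vf - vc) * kj < K * vf := (div_lt_iff₀ hvf).mp hK0
    unfold G
    have e : vf * (1 - K / kj) = (vf * kj - vf * K) / kj := by field_simp
    rw [e, div_le_iff₀ hkj]
    nlinarith
  constructor
  · rintro ⟨a, b⟩ ⟨h1, h2, h3, h4, h5⟩
    simp only at h1 h2 h3 h4 h5 ⊢
    have e : a = 2 * K - b := by linarith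
    subst e
    have hmin : b * min vc (G vf kj b) ≤ b * G vf kj b :=
      mul_le_mul_of_nonneg_left (min_le_right _ _) h3
    have key : (2 * K - b) * G vf kj (2 * K - b) + b * G vf kj b
        ≤ vf * (1 - K / kj) * (2 * K) := by
      unfold G
      field_simp
      nlinarith [mul_nonneg (mul_nonneg hvf.le hkj.le) (sq_nonneg (K - b)), sq_nonneg (K - b)]
    unfold W
    rw [h5, div_le_iff₀ (by linarith : (0:ℝ) < 2 * K)]
    linarith
  · refine ⟨⟨le_of_lt hKpos, hK, le_of_lt hKpos, hK, by ring⟩, ?_⟩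
    unfold W
    rw [min_eq_right hGK]
    rw [div_eq_iff (by linarith : K + K ≠ 0)]
    unfold G
    ring
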